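/- Let A = diag(3,3,6,6), j_A = (1/3, 1/3, 1/6, 1/6), and let G₃ be the subgroup of (ℚ/ℤ)⁴ generated by j_A and g₃ = (2/3, 0, 1/3, 0), and G₄ the subgroup generated by j_A and g₄ = (0, 2/3, 1/3, 0). Then (noting Aᵀ = A) both groups are self-dual: G₃^T = G₃ and G₄^T = G₄. -/

import Mathlib

open scoped BigOperators
open Matrix

noncomputable section

abbrev QZ : Type := AddCircle (1 : ℚ)

def qz : ℚ →+ QZ := QuotientAddGroup.mk' _

def GA {n : ℕ} (A : Matrix (Fin n) (Fin n) ℤ) : AddSubgroup (Fin n → QZ) where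
  carrier := {g | ∀ i, ∑ j, A i j • g j = 0}
  zero_mem' := by intro i; simp
  add_mem' := by
    intro a b ha hb i
    simp only [Pi.add_apply, smul_add, Finset.sum_add_distrib, ha i, hb i, add_zero]
  neg_mem' := by
    intro a ha i
    simp only [Pi.neg_apply, smul_neg, Finset.sum_neg_distrib, ha i, neg_zero]

def SLA {n : ℕ} (A : Matrix (Fin n) (Fin n) ℤ) : AddSubgroup (Fin n → QZ) where
  carrier := {g | g ∈ GA A ∧ ∑ i, g i = 0}
  zero_mem' := ⟨(GA A).zero_mem, by simp⟩
  add_mem' := by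
    intro a b ha hb
    exact ⟨(GA A).add_mem ha.1 hb.1, by simp [Pi.add_apply, Finset.sum_add_distrib, ha.2, hb.2]⟩
  neg_mem' := by
    intro a ha
    exact ⟨(GA A).neg_mem ha.1, by simp [Pi.neg_apply, Finset.sum_neg_distrib, ha.2]⟩

def jA {n : ℕ} (A : Matrix (Fin n) (Fin n) ℤ) : Fin n → QZ :=
  fun i => qz (((A.map (Int.cast : ℤ → ℚ))⁻¹).mulVec 1 i)

/-- `v : ℚ^n` is a lift of `g : (ℚ/ℤ)^n`. -/
def IsLift {n : ℕ} (v : Fin n → ℚ) (g : Fin n → QZ) : Prop := ∀ i, qz (v i) = g i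

lemma qz_eq_zero_iff (q : ℚ) : qz q = 0 ↔ ∃ m : ℤ, (m : ℚ) = q := by
  constructor
  · intro h
    have : q ∈ AddSubgroup.zmultiples (1 : ℚ) := by
      rwa [qz, QuotientAddGroup.mk'_apply, QuotientAddGroup.eq_zero_iff] at h
    obtain ⟨k, hk⟩ := this
    exact ⟨k, by simpa using hk⟩
  · rintro ⟨m, rfl⟩
    rw [qz, QuotientAddGroup.mk'_apply, QuotientAddGroup.eq_zero_iff]
    exact ⟨m, by simp⟩

lemma exists_lift {n : ℕ} (g : Fin n → QZ) : ∃ v : Fin n → ℚ, IsLift v g := by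
  choose v hv using fun i => QuotientAddGroup.mk'_surjective _ (g i)
  exact ⟨v, hv⟩

lemma row_int {n : ℕ} {A : Matrix (Fin n) (Fin n) ℤ} {h : Fin n → QZ} (hh : h ∈ GA A)
    {vh : Fin n → ℚ} (hl : IsLift vh h) (i : Fin n) :
    ∃ m : ℤ, (m : ℚ) = ∑ j, (A i j : ℚ) * vh j := by
  have h0 : qz (∑ j, (A i j : ℚ) * vh j) = 0 := by
    have := hh i
    calc qz (∑ j, (A i j : ℚ) * vh j) = ∑ j, A i j • qz (vh j) := by
          rw [map_sum]
          refine Finset.sum_congr rfl fun j _ => ?_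
          rw [← map_zsmul qz, zsmul_eq_mul]
      _ = ∑ j, A i j • h j := by
          refine Finset.sum_congr rfl fun j _ => by rw [hl j]
      _ = 0 := hh i
  exact (qz_eq_zero_iff _).1 h0

/-- The Berglund–Hübsch dual `H^T` of a subgroup `H ≤ G_A`: all `g ∈ G_{Aᵀ}` such that
for every `h ∈ H` and all lifts `ĝ, ĥ ∈ ℚ^n` of `g, h`, the number `∑ᵢⱼ ĝᵢ Aᵢⱼ ĥⱼ` is an
integer. -/
def dual {n : ℕ} (A : Matrix (Fin n) (Fin n) ℤ) (H : AddSubgroup (Fin n → QZ))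
    (hH : H ≤ GA A) : AddSubgroup (Fin n → QZ) where
  carrier := {g | g ∈ GA Aᵀ ∧ ∀ h ∈ H, ∀ vg vh : Fin n → ℚ, IsLift vg g → IsLift vh h →
    ∃ m : ℤ, (m : ℚ) = ∑ i, ∑ j, vg i * (A i j : ℚ) * vh j}
  zero_mem' := by
    refine ⟨(GA Aᵀ).zero_mem, ?_⟩
    intro h hh vg vh lg lh
    have hg : ∀ i, ∃ m : ℤ, (m : ℚ) = vg i := by
      intro i
      exact (qz_eq_zero_iff _).1 ((lg i).trans rfl)
    choose mg hmg using hg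
    choose c hc using fun i => row_int (hH hh) lh i
    refine ⟨∑ i, mg i * c i, ?_⟩
    push_cast
    calc (∑ i, (mg i : ℚ) * (c i : ℚ))
        = ∑ i, vg i * ∑ j, (A i j : ℚ) * vh j := by
          refine Finset.sum_congr rfl fun i _ => by rw [hmg i, hc i]
      _ = ∑ i, ∑ j, vg i * (A i j : ℚ) * vh j := by
          refine Finset.sum_congr rfl fun i _ => ?_
          rw [Finset.mul_sum]
          exact Finset.sum_congr rfl fun j _ => (mul_assoc _ _ _).symm
  add_mem' := by
    intro a b ha hb
    refine ⟨(GA Aᵀ).add_mem ha.1 hb.1, ?_⟩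
    intro h hh vg vh lg lh
    obtain ⟨va, hva⟩ := exists_lift a
    have hvb : IsLift (vg - va) b := by
      intro i
      have : qz (vg i - va i) = qz (vg i) - qz (va i) := map_sub qz _ _
      rw [Pi.sub_apply, this, lg i, hva i, Pi.add_apply, add_sub_cancel_left]
    obtain ⟨m₁, e₁⟩ := ha.2 h hh va vh hva lh
    obtain ⟨m₂, e₂⟩ := hb.2 h hh (vg - va) vh hvb lh
    refine ⟨m₁ + m₂, ?_⟩
    push_cast
    rw [e₁, e₂, ← Finset.sum_add_distrib]
    refine Finset.sum_congr rfl fun i _ => ?_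
    rw [← Finset.sum_add_distrib]
    refine Finset.sum_congr rfl fun j _ => ?_
    simp only [Pi.sub_apply]
    ring
  neg_mem' := by
    intro a ha
    refine ⟨(GA Aᵀ).neg_mem ha.1, ?_⟩
    intro h hh vg vh lg lh
    have hvg : IsLift (-vg) a := by
      intro i
      have : qz (-(vg i)) = - qz (vg i) := map_neg qz _
      rw [Pi.neg_apply, this, lg i, Pi.neg_apply, neg_neg]
    obtain ⟨m, e⟩ := ha.2 h hh (-vg) vh hvg lh
    refine ⟨-m, ?_⟩
    push_cast
    rw [e, ← Finset.sum_neg_distrib]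
    refine Finset.sum_congr rfl fun i _ => ?_
    rw [← Finset.sum_neg_distrib]
    refine Finset.sum_congr rfl fun j _ => ?_
    simp only [Pi.neg_apply]
    ring

lemma dual_le {n : ℕ} (A : Matrix (Fin n) (Fin n) ℤ) (H : AddSubgroup (Fin n → QZ))
    (hH : H ≤ GA A) : dual A H hH ≤ GA Aᵀ := fun _ hg => hg.1

lemma SLA_le {n : ℕ} (A : Matrix (Fin n) (Fin n) ℤ) : SLA A ≤ GA A := fun _ hg => hg.1


lemma zsmul_qz (k : ℤ) (q : ℚ) : k • qz q = qz (k * q) := by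
  rw [← map_zsmul qz, zsmul_eq_mul]

lemma qz_one' : qz 1 = 0 := (qz_eq_zero_iff _).2 ⟨1, by norm_num⟩
lemma qz_two' : qz (3 * (2/3)) = 0 := (qz_eq_zero_iff _).2 ⟨2, by norm_num⟩
lemma qz_c1' : qz (6 * (1/3)) = 0 := (qz_eq_zero_iff _).2 ⟨2, by norm_num⟩
lemma qz_c2' : qz (3 * (1/3)) = 0 := (qz_eq_zero_iff _).2 ⟨1, by norm_num⟩
lemma qz_c3' : qz (6 * (1/6)) = 0 := (qz_eq_zero_iff _).2 ⟨1, by norm_num⟩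
lemma qz_c4' : qz 2 = 0 := (qz_eq_zero_iff _).2 ⟨2, by norm_num⟩
lemma qz_c5' : qz (6 * (2/3)) = 0 := (qz_eq_zero_iff _).2 ⟨4, by norm_num⟩
lemma qz_c6' : qz (6 * 3⁻¹) = 0 := (qz_eq_zero_iff _).2 ⟨2, by norm_num⟩

/-- The exponent matrix of `W = x³ + y³ + z⁶ + w⁶` (note `Aᵀ = A`). -/
def A13 : Matrix (Fin 4) (Fin 4) ℤ := Matrix.diagonal ![3, 3, 6, 6]

/-- The exponential grading element `j_A = (1/3, 1/3, 1/6, 1/6)`. -/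
def jvec13 : Fin 4 → QZ := ![qz (1/3), qz (1/3), qz (1/6), qz (1/6)]

/-- `G₃ = ⟨j_A, (2/3,0,1/3,0)⟩`. -/
def G3 : AddSubgroup (Fin 4 → QZ) :=
  AddSubgroup.closure {jvec13, ![qz (2/3), 0, qz (1/3), 0]}

lemma G3_le : G3 ≤ GA A13 := by
  rw [G3, AddSubgroup.closure_le]
  rintro x hx
  simp only [Set.mem_insert_iff, Set.mem_singleton_iff] at hx
  rcases hx with rfl | rfl <;>
  · show ∀ i, ∑ j, A13 i j • _ = 0
    intro i
    fin_cases i <;>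
      simp [A13, jvec13, Matrix.diagonal, Fin.sum_univ_four, zsmul_qz] <;>
      (first
        | exact qz_one'
        | exact qz_two'
        | exact qz_c1'
        | exact qz_c2'
        | exact qz_c3'
        | exact qz_c4'
        | exact qz_c5'
        | exact qz_c6')

/-- `G₄ = ⟨j_A, (0,2/3,1/3,0)⟩`. -/
def G4 : AddSubgroup (Fin 4 → QZ) :=
  AddSubgroup.closure {jvec13, ![0, qz (2/3), qz (1/3), 0]}

lemma G4_le : G4 ≤ GA A13 := by
  rw [G4, AddSubgroup.closure_le]
  rintro x hx
  simp only [Set.mem_insert_iff, Set.mem_singleton_iff] at hx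
  rcases hx with rfl | rfl <;>
  · show ∀ i, ∑ j, A13 i j • _ = 0
    intro i
    fin_cases i <;>
      simp [A13, jvec13, Matrix.diagonal, Fin.sum_univ_four, zsmul_qz] <;>
      (first
        | exact qz_one'
        | exact qz_two'
        | exact qz_c1'
        | exact qz_c2'
        | exact qz_c3'
        | exact qz_c4'
        | exact qz_c5'
        | exact qz_c6')

lemma lift_sub_int {q q' : ℚ} (h : qz q = qz q') : ∃ m : ℤ, (m : ℚ) = q - q' := by
  apply (qz_eq_zero_iff _).1
  rw [map_sub, h, sub_self]

lemma qz_eq_of_int {q q' : ℚ} (h : ∃ m : ℤ, (m : ℚ) = q - q') : qz q = qz q' := by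
  have h0 : qz (q - q') = 0 := (qz_eq_zero_iff _).2 h
  rw [map_sub] at h0
  exact sub_eq_zero.1 h0

lemma qz_frac_eq (x y n : ℤ) (hn : (n : ℚ) ≠ 0) (h : n ∣ x - y) :
    qz ((x : ℚ)/n) = qz ((y : ℚ)/n) := by
  obtain ⟨t, ht⟩ := h
  refine qz_eq_of_int ⟨t, ?_⟩
  have hxy : (x : ℚ) - y = n * t := by exact_mod_cast congrArg (Int.cast : ℤ → ℚ) ht
  rw [div_sub_div_same, hxy, mul_comm, mul_div_assoc, div_self hn, mul_one]

lemma exists_rep (k : ℤ) (hk : (k : ℚ) ≠ 0) {x : QZ} (hx : k • x = 0) :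
    ∃ a : ℤ, x = qz ((a : ℚ)/k) := by
  obtain ⟨v, hv⟩ : ∃ v, qz v = x := QuotientAddGroup.mk'_surjective _ x
  rw [← hv, zsmul_qz] at hx
  obtain ⟨a, ha⟩ := (qz_eq_zero_iff _).1 hx
  refine ⟨a, ?_⟩
  rw [← hv]
  congr 1
  rw [eq_div_iff hk, ha]
  ring

lemma pairing_indep {n : ℕ} (A : Matrix (Fin n) (Fin n) ℤ) {g h : Fin n → QZ}
    (hg : g ∈ GA Aᵀ) (hh : h ∈ GA A) {vg vh vg' vh' : Fin n → ℚ}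
    (lg : IsLift vg g) (lh : IsLift vh h) (lg' : IsLift vg' g) (lh' : IsLift vh' h)
    (H : ∃ m : ℤ, (m : ℚ) = ∑ i, ∑ j, vg i * (A i j : ℚ) * vh j) :
    ∃ m : ℤ, (m : ℚ) = ∑ i, ∑ j, vg' i * (A i j : ℚ) * vh' j := by
  obtain ⟨m, hm⟩ := H
  choose p hp using fun i => lift_sub_int ((lg' i).trans (lg i).symm)
  choose q hq using fun j => lift_sub_int ((lh' j).trans (lh j).symm)
  choose r hr using fun i => row_int hh lh i
  choose s hs using fun j => row_int hg lg j
  have hvg' : ∀ i, vg' i = vg i + p i := fun i => by have := hp i; linarith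
  have hvh' : ∀ j, vh' j = vh j + q j := fun j => by have := hq j; linarith
  have e1 : ∑ i, (p i : ℚ) * r i = ∑ i, ∑ j, (p i : ℚ) * (A i j : ℚ) * vh j := by
    refine Finset.sum_congr rfl fun i _ => ?_
    rw [hr i, Finset.mul_sum]
    exact Finset.sum_congr rfl fun j _ => (mul_assoc _ _ _).symm
  have e2 : ∑ j, (s j : ℚ) * q j = ∑ i, ∑ j, vg i * (A i j : ℚ) * q j := by
    rw [Finset.sum_comm]
    refine Finset.sum_congr rfl fun j _ => ?_
    rw [hs j, Finset.sum_mul]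
    refine Finset.sum_congr rfl fun i _ => ?_
    rw [Matrix.transpose_apply]
    ring
  refine ⟨m + (∑ i, p i * r i) + (∑ j, s j * q j) + (∑ i, ∑ j, p i * A i j * q j), ?_⟩
  push_cast
  simp only [hvg', hvh']
  have expand : ∀ i j : Fin n, (vg i + (p i : ℚ)) * (A i j : ℚ) * (vh j + (q j : ℚ)) =
      vg i * (A i j : ℚ) * vh j + (p i : ℚ) * (A i j : ℚ) * vh j +
      vg i * (A i j : ℚ) * (q j : ℚ) + (p i : ℚ) * (A i j : ℚ) * (q j : ℚ) :=
    fun i j => by ring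
  simp only [expand, Finset.sum_add_distrib]
  rw [hm, e1, e2]

lemma mem_dual_of_gens {n : ℕ} (A : Matrix (Fin n) (Fin n) ℤ) (S : Set (Fin n → QZ))
    (hS : AddSubgroup.closure S ≤ GA A) {g : Fin n → QZ} (hg : g ∈ GA Aᵀ)
    (hgen : ∀ h ∈ S, ∀ vg vh : Fin n → ℚ, IsLift vg g → IsLift vh h →
      ∃ m : ℤ, (m : ℚ) = ∑ i, ∑ j, vg i * (A i j : ℚ) * vh j) :
    g ∈ dual A (AddSubgroup.closure S) hS := by
  refine ⟨hg, ?_⟩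
  intro h hh
  refine AddSubgroup.closure_induction (fun x hx => hgen x hx) ?_ ?_ ?_ hh
  · intro vg vh lg lh
    choose q hq using fun j => (qz_eq_zero_iff (vh j)).1 (lh j)
    choose s hs using fun j => row_int hg lg j
    refine ⟨∑ j, s j * q j, ?_⟩
    push_cast
    rw [Finset.sum_comm]
    refine Finset.sum_congr rfl fun j _ => ?_
    rw [hq j, hs j, Finset.sum_mul]
    refine Finset.sum_congr rfl fun i _ => ?_
    rw [Matrix.transpose_apply]
    ring
  · intro x y _ _ px py vg vh lg lh
    obtain ⟨vx, lx⟩ := exists_lift x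
    have ly : IsLift (vh - vx) y := by
      intro j
      have : qz (vh j - vx j) = qz (vh j) - qz (vx j) := map_sub qz _ _
      rw [Pi.sub_apply, this, lh j, lx j, Pi.add_apply, add_sub_cancel_left]
    obtain ⟨m1, e1⟩ := px vg vx lg lx
    obtain ⟨m2, e2⟩ := py vg (vh - vx) lg ly
    refine ⟨m1 + m2, ?_⟩
    push_cast
    rw [e1, e2, ← Finset.sum_add_distrib]
    refine Finset.sum_congr rfl fun i _ => ?_
    rw [← Finset.sum_add_distrib]
    refine Finset.sum_congr rfl fun j _ => ?_
    simp only [Pi.sub_apply]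
    ring
  · intro x _ px vg vh lg lh
    have l : IsLift (-vh) x := by
      intro j
      have : qz (-(vh j)) = - qz (vh j) := map_neg qz _
      rw [Pi.neg_apply, this, lh j, Pi.neg_apply, neg_neg]
    obtain ⟨m, e⟩ := px vg (-vh) lg l
    refine ⟨-m, ?_⟩
    push_cast
    rw [e, ← Finset.sum_neg_distrib]
    refine Finset.sum_congr rfl fun i _ => ?_
    rw [← Finset.sum_neg_distrib]
    refine Finset.sum_congr rfl fun j _ => ?_
    simp only [Pi.neg_apply]
    ring

lemma A13T : A13ᵀ = A13 := Matrix.diagonal_transpose _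


lemma GA13_rep {g : Fin 4 → QZ} (hg : g ∈ GA A13) :
    ∃ a b c d : ℤ, g = ![qz ((a:ℚ)/3), qz ((b:ℚ)/3), qz ((c:ℚ)/6), qz ((d:ℚ)/6)] := by
  have h0 := hg 0
  have h1 := hg 1
  have h2 := hg 2
  have h3 := hg 3
  simp [A13, Matrix.diagonal, Fin.sum_univ_four] at h0 h1 h2 h3
  obtain ⟨a, ha⟩ := exists_rep 3 (by norm_num) h0
  obtain ⟨b, hb⟩ := exists_rep 3 (by norm_num) h1
  obtain ⟨c, hc⟩ := exists_rep 6 (by norm_num) h2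
  obtain ⟨d, hd⟩ := exists_rep 6 (by norm_num) h3
  refine ⟨a, b, c, d, ?_⟩
  funext i
  fin_cases i <;> simp [ha, hb, hc, hd]


def gen3 : Fin 4 → QZ := ![qz (2/3), 0, qz (1/3), 0]
def gen4 : Fin 4 → QZ := ![0, qz (2/3), qz (1/3), 0]

lemma lift_j : IsLift ![1/3, 1/3, 1/6, 1/6] jvec13 := by
  intro i; fin_cases i <;> simp [jvec13]

lemma lift_gen3 : IsLift ![2/3, 0, 1/3, 0] gen3 := by
  intro i; fin_cases i <;> simp [gen3]

lemma lift_gen4 : IsLift ![0, 2/3, 1/3, 0] gen4 := by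
  intro i; fin_cases i <;> simp [gen4]

lemma lift_rep (a b c d : ℤ) :
    IsLift ![(a:ℚ)/3, (b:ℚ)/3, (c:ℚ)/6, (d:ℚ)/6]
      ![qz ((a:ℚ)/3), qz ((b:ℚ)/3), qz ((c:ℚ)/6), qz ((d:ℚ)/6)] := by
  intro i; fin_cases i <;> simp

lemma test_pair : ∃ m : ℤ, (m : ℚ) = ∑ i, ∑ j,
    (![1/3, 1/3, 1/6, 1/6] : Fin 4 → ℚ) i * (A13 i j : ℚ) * (![1/3, 1/3, 1/6, 1/6] : Fin 4 → ℚ) j := by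
  refine ⟨1, ?_⟩
  norm_num [A13, Matrix.diagonal, Fin.sum_univ_four, Matrix.cons_val_two, Matrix.cons_val_three]


lemma qz_add (q r : ℚ) : qz q + qz r = qz (q + r) := (map_add qz q r).symm

lemma jvec_mem_G3 : jvec13 ∈ G3 := AddSubgroup.subset_closure (Set.mem_insert _ _)
lemma gen3_mem_G3 : gen3 ∈ G3 :=
  AddSubgroup.subset_closure (Set.mem_insert_of_mem _ rfl)
lemma jvec_mem_G4 : jvec13 ∈ G4 := AddSubgroup.subset_closure (Set.mem_insert _ _)
lemma gen4_mem_G4 : gen4 ∈ G4 :=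
  AddSubgroup.subset_closure (Set.mem_insert_of_mem _ rfl)

lemma dual3_le : dual A13 G3 G3_le ≤ G3 := by
  intro g hg
  have hgA : g ∈ GA A13 := by
    have := hg.1
    rwa [A13T] at this
  obtain ⟨a, b, c, d, rfl⟩ := GA13_rep hgA
  obtain ⟨m, hm⟩ := hg.2 jvec13 jvec_mem_G3 _ _ (lift_rep a b c d) lift_j
  obtain ⟨m', hm'⟩ := hg.2 gen3 gen3_mem_G3 _ _ (lift_rep a b c d) lift_gen3
  simp [A13, Matrix.diagonal, Fin.sum_univ_four] at hm hm'
  have h6 : 2*a + 2*b + c + d = 6*m := by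
    have : (2*a + 2*b + c + d : ℚ) = 6*m := by rw [hm]; ring
    exact_mod_cast this
  have h3 : 2*a + c = 3*m' := by
    have : (2*a + c : ℚ) = 3*m' := by rw [hm']; ring
    exact_mod_cast this
  have key : (![qz ((a:ℚ)/3), qz ((b:ℚ)/3), qz ((c:ℚ)/6), qz ((d:ℚ)/6)] : Fin 4 → QZ)
      = d • jvec13 + (3*m - a - b - d) • gen3 := by
    funext i
    fin_cases i <;>
      simp [jvec13, gen3]
    · rw [zsmul_qz, zsmul_qz, qz_add]
      obtain ⟨t, ht⟩ : (3:ℤ) ∣ a - (d + 2*(3*m - a - b - d)) := by omega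
      refine qz_eq_of_int ⟨t, ?_⟩
      have hQ : ((a - (d + 2*(3*m - a - b - d)) : ℤ) : ℚ) = ((3*t : ℤ) : ℚ) := by
        exact_mod_cast ht
      push_cast at hQ ⊢
      linarith
    · rw [zsmul_qz]
      obtain ⟨t, ht⟩ : (3:ℤ) ∣ b - d := by omega
      refine qz_eq_of_int ⟨t, ?_⟩
      have hQ : ((b - d : ℤ) : ℚ) = ((3*t : ℤ) : ℚ) := by exact_mod_cast ht
      push_cast at hQ ⊢
      linarith
    · rw [zsmul_qz, zsmul_qz, qz_add]
      obtain ⟨t, ht⟩ : (6:ℤ) ∣ c - (d + 2*(3*m - a - b - d)) := by omega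
      refine qz_eq_of_int ⟨t, ?_⟩
      have hQ : ((c - (d + 2*(3*m - a - b - d)) : ℤ) : ℚ) = ((6*t : ℤ) : ℚ) := by
        exact_mod_cast ht
      push_cast at hQ ⊢
      linarith
    · rw [zsmul_qz]
      refine qz_eq_of_int ⟨0, ?_⟩
      push_cast
      ring
  rw [key]
  exact AddSubgroup.add_mem _ (AddSubgroup.zsmul_mem _ jvec_mem_G3 d)
    (AddSubgroup.zsmul_mem _ gen3_mem_G3 _)


lemma jvec_GA : jvec13 ∈ GA A13 := G3_le jvec_mem_G3
lemma gen3_GA : gen3 ∈ GA A13 := G3_le gen3_mem_G3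
lemma gen4_GA : gen4 ∈ GA A13 := G4_le gen4_mem_G4
lemma jvec_GAT : jvec13 ∈ GA A13ᵀ := by rw [A13T]; exact jvec_GA
lemma gen3_GAT : gen3 ∈ GA A13ᵀ := by rw [A13T]; exact gen3_GA
lemma gen4_GAT : gen4 ∈ GA A13ᵀ := by rw [A13T]; exact gen4_GA

lemma le_dual3 : G3 ≤ dual A13 G3 G3_le := by
  refine (AddSubgroup.closure_le _).2 ?_
  rintro x hx
  simp only [Set.mem_insert_iff, Set.mem_singleton_iff] at hx
  have main : ∀ y : Fin 4 → QZ, y ∈ GA A13ᵀ →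
      (∀ vy : Fin 4 → ℚ, IsLift vy y → ∀ h ∈ ({jvec13, ![qz (2/3), 0, qz (1/3), 0]} :
        Set (Fin 4 → QZ)), ∀ vh : Fin 4 → ℚ, IsLift vh h →
        ∃ m : ℤ, (m : ℚ) = ∑ i, ∑ j, vy i * (A13 i j : ℚ) * vh j) →
      y ∈ dual A13 G3 G3_le := by
    intro y hy hp
    exact mem_dual_of_gens A13 _ G3_le hy (fun h hh vg vh lg lh => hp vg lg h hh vh lh)
  rcases hx with rfl | rfl
  · refine main _ jvec_GAT ?_
    intro vy ly h hh vh lh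
    simp only [Set.mem_insert_iff, Set.mem_singleton_iff] at hh
    rcases hh with rfl | rfl
    · exact pairing_indep A13 jvec_GAT jvec_GA lift_j lift_j ly lh
        ⟨1, by norm_num [A13, Matrix.diagonal, Fin.sum_univ_four, Matrix.cons_val_two, Matrix.cons_val_three]⟩
    · exact pairing_indep A13 jvec_GAT gen3_GA lift_j lift_gen3 ly lh
        ⟨1, by norm_num [A13, Matrix.diagonal, Fin.sum_univ_four, Matrix.cons_val_two, Matrix.cons_val_three]⟩
  · refine main _ gen3_GAT ?_
    intro vy ly h hh vh lh
    simp only [Set.mem_insert_iff, Set.mem_singleton_iff] at hh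
    rcases hh with rfl | rfl
    · exact pairing_indep A13 gen3_GAT jvec_GA lift_gen3 lift_j ly lh
        ⟨1, by norm_num [A13, Matrix.diagonal, Fin.sum_univ_four, Matrix.cons_val_two, Matrix.cons_val_three]⟩
    · exact pairing_indep A13 gen3_GAT gen3_GA lift_gen3 lift_gen3 ly lh
        ⟨2, by norm_num [A13, Matrix.diagonal, Fin.sum_univ_four, Matrix.cons_val_two, Matrix.cons_val_three]⟩


lemma dual3 : dual A13 G3 G3_le = G3 := le_antisymm dual3_le le_dual3

lemma dual4_le : dual A13 G4 G4_le ≤ G4 := by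
  intro g hg
  have hgA : g ∈ GA A13 := by
    have := hg.1
    rwa [A13T] at this
  obtain ⟨a, b, c, d, rfl⟩ := GA13_rep hgA
  obtain ⟨m, hm⟩ := hg.2 jvec13 jvec_mem_G4 _ _ (lift_rep a b c d) lift_j
  obtain ⟨m', hm'⟩ := hg.2 gen4 gen4_mem_G4 _ _ (lift_rep a b c d) lift_gen4
  simp [A13, Matrix.diagonal, Fin.sum_univ_four] at hm hm'
  have h6 : 2*a + 2*b + c + d = 6*m := by
    have : (2*a + 2*b + c + d : ℚ) = 6*m := by rw [hm]; ring
    exact_mod_cast this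
  have h3 : 2*b + c = 3*m' := by
    have : (2*b + c : ℚ) = 3*m' := by rw [hm']; ring
    exact_mod_cast this
  have key : (![qz ((a:ℚ)/3), qz ((b:ℚ)/3), qz ((c:ℚ)/6), qz ((d:ℚ)/6)] : Fin 4 → QZ)
      = d • jvec13 + (3*m - a - b - d) • gen4 := by
    funext i
    fin_cases i <;>
      simp [jvec13, gen4]
    · rw [zsmul_qz]
      obtain ⟨t, ht⟩ : (3:ℤ) ∣ a - d := by omega
      refine qz_eq_of_int ⟨t, ?_⟩
      have hQ : ((a - d : ℤ) : ℚ) = ((3*t : ℤ) : ℚ) := by exact_mod_cast ht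
      push_cast at hQ ⊢
      linarith
    · rw [zsmul_qz, zsmul_qz, qz_add]
      obtain ⟨t, ht⟩ : (3:ℤ) ∣ b - (d + 2*(3*m - a - b - d)) := by omega
      refine qz_eq_of_int ⟨t, ?_⟩
      have hQ : ((b - (d + 2*(3*m - a - b - d)) : ℤ) : ℚ) = ((3*t : ℤ) : ℚ) := by
        exact_mod_cast ht
      push_cast at hQ ⊢
      linarith
    · rw [zsmul_qz, zsmul_qz, qz_add]
      obtain ⟨t, ht⟩ : (6:ℤ) ∣ c - (d + 2*(3*m - a - b - d)) := by omega
      refine qz_eq_of_int ⟨t, ?_⟩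
      have hQ : ((c - (d + 2*(3*m - a - b - d)) : ℤ) : ℚ) = ((6*t : ℤ) : ℚ) := by
        exact_mod_cast ht
      push_cast at hQ ⊢
      linarith
    · rw [zsmul_qz]
      refine qz_eq_of_int ⟨0, ?_⟩
      push_cast
      ring
  rw [key]
  exact AddSubgroup.add_mem _ (AddSubgroup.zsmul_mem _ jvec_mem_G4 d)
    (AddSubgroup.zsmul_mem _ gen4_mem_G4 _)

lemma le_dual4 : G4 ≤ dual A13 G4 G4_le := by
  refine (AddSubgroup.closure_le _).2 ?_
  rintro x hx
  simp only [Set.mem_insert_iff, Set.mem_singleton_iff] at hx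
  have main : ∀ y : Fin 4 → QZ, y ∈ GA A13ᵀ →
      (∀ vy : Fin 4 → ℚ, IsLift vy y → ∀ h ∈ ({jvec13, ![0, qz (2/3), qz (1/3), 0]} :
        Set (Fin 4 → QZ)), ∀ vh : Fin 4 → ℚ, IsLift vh h →
        ∃ m : ℤ, (m : ℚ) = ∑ i, ∑ j, vy i * (A13 i j : ℚ) * vh j) →
      y ∈ dual A13 G4 G4_le := by
    intro y hy hp
    exact mem_dual_of_gens A13 _ G4_le hy (fun h hh vg vh lg lh => hp vg lg h hh vh lh)
  rcases hx with rfl | rfl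
  · refine main _ jvec_GAT ?_
    intro vy ly h hh vh lh
    simp only [Set.mem_insert_iff, Set.mem_singleton_iff] at hh
    rcases hh with rfl | rfl
    · exact pairing_indep A13 jvec_GAT jvec_GA lift_j lift_j ly lh
        ⟨1, by norm_num [A13, Matrix.diagonal, Fin.sum_univ_four, Matrix.cons_val_two, Matrix.cons_val_three]⟩
    · exact pairing_indep A13 jvec_GAT gen4_GA lift_j lift_gen4 ly lh
        ⟨1, by norm_num [A13, Matrix.diagonal, Fin.sum_univ_four, Matrix.cons_val_two, Matrix.cons_val_three]⟩
  · refine main _ gen4_GAT ?_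
    intro vy ly h hh vh lh
    simp only [Set.mem_insert_iff, Set.mem_singleton_iff] at hh
    rcases hh with rfl | rfl
    · exact pairing_indep A13 gen4_GAT jvec_GA lift_gen4 lift_j ly lh
        ⟨1, by norm_num [A13, Matrix.diagonal, Fin.sum_univ_four, Matrix.cons_val_two, Matrix.cons_val_three]⟩
    · exact pairing_indep A13 gen4_GAT gen4_GA lift_gen4 lift_gen4 ly lh
        ⟨2, by norm_num [A13, Matrix.diagonal, Fin.sum_univ_four, Matrix.cons_val_two, Matrix.cons_val_three]⟩

lemma dual4 : dual A13 G4 G4_le = G4 := le_antisymm dual4_le le_dual4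

/-- for `A = diag(3,3,6,6)` (so `Aᵀ = A`), the subgroups
`G₃ = ⟨j_A, (2/3,0,1/3,0)⟩` and `G₄ = ⟨j_A, (0,2/3,1/3,0)⟩` are self-dual:
`G₃^T = G₃` and `G₄^T = G₄`. -/
theorem stmt13 : dual A13 G3 G3_le = G3 ∧ dual A13 G4 G4_le = G4 := ⟨dual3, dual4⟩

end
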